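/- For any polynomial control system Σ on ℝ^n: (i) S_{k+1} ⊆ S_k for every k ≥ 0; (ii) there exists an integer r* such that S_k = S_{r*} for all k ≥ r* and S_{r*} = S_∞; (iii) consequently S_∞ = 𝕍(I_{M_{r*}}), so the set S_∞ of accessibility singular points is an algebraic set. -/

import Mathlib

open MvPolynomial

/-- Evaluation of a polynomial vector field at a point of `ℝ^n`. -/
noncomputable def pvfEval {n : ℕ} (X : Fin n → MvPolynomial (Fin n) ℝ) (a : Fin n → ℝ) :
    Fin n → ℝ := fun i => eval a (X i)

/-- Lie bracket of polynomial vector fields: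
`[X,Y]_j = ∑ i, (X i * ∂Y_j/∂x_i − Y i * ∂X_j/∂x_i)`. -/
noncomputable def pBracket {n : ℕ} (X Y : Fin n → MvPolynomial (Fin n) ℝ) :
    Fin n → MvPolynomial (Fin n) ℝ :=
  fun j => ∑ i, (X i * pderiv i (Y j) - Y i * pderiv i (X j))

/-- Lie derivative of a polynomial along a polynomial vector field:
`L_X p = ∑ i, X i * ∂p/∂x_i`. -/
noncomputable def pLieDeriv {n : ℕ} (X : Fin n → MvPolynomial (Fin n) ℝ)
    (p : MvPolynomial (Fin n) ℝ) : MvPolynomial (Fin n) ℝ :=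
  ∑ i, X i * pderiv i p

/-- An ideal `I` is invariant under `L_X` if `L_X p ∈ I` for every `p ∈ I`. -/
def IdealInvariant {n : ℕ} (X : Fin n → MvPolynomial (Fin n) ℝ)
    (I : Ideal (MvPolynomial (Fin n) ℝ)) : Prop :=
  ∀ p ∈ I, pLieDeriv X p ∈ I

/-- The algebraic set `𝕍(J)` of an ideal `J`. -/
def zeroSet {n : ℕ} (J : Ideal (MvPolynomial (Fin n) ℝ)) : Set (Fin n → ℝ) :=
  {a | ∀ p ∈ J, eval a p = 0}

/-- The vanishing ideal `𝕀(A)` of a set `A ⊆ ℝ^n`. -/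
noncomputable def zeroIdeal {n : ℕ} (A : Set (Fin n → ℝ)) :
    Ideal (MvPolynomial (Fin n) ℝ) where
  carrier := {p | ∀ a ∈ A, eval a p = 0}
  add_mem' := fun hp hq a ha => by simp [hp a ha, hq a ha]
  zero_mem' := fun a ha => by simp
  smul_mem' := fun c p hp a ha => by simp [smul_eq_mul, hp a ha]

/-- The family `𝒞^k` of Lie brackets of depth at most `k` of the system vector fields
`f, g_1, …, g_m`: `𝒞^0 = {f, g_1, …, g_m}` and
`𝒞^{k+1} = 𝒞^k ∪ {[X,h] : X ∈ {f, g_1, …, g_m}, h ∈ 𝒞^k}`. -/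
def accFam {n m : ℕ} (f : Fin n → MvPolynomial (Fin n) ℝ)
    (g : Fin m → Fin n → MvPolynomial (Fin n) ℝ) :
    ℕ → Set (Fin n → MvPolynomial (Fin n) ℝ)
  | 0 => insert f (Set.range g)
  | k + 1 => accFam f g k ∪
      {h | ∃ X ∈ insert f (Set.range g), ∃ h' ∈ accFam f g k, h = pBracket X h'}

/-- `C^k(a) = span_ℝ {h(a) : h ∈ 𝒞^k}`. -/
noncomputable def accSpan {n m : ℕ} (f : Fin n → MvPolynomial (Fin n) ℝ)
    (g : Fin m → Fin n → MvPolynomial (Fin n) ℝ) (k : ℕ) (a : Fin n → ℝ) :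
    Submodule ℝ (Fin n → ℝ) :=
  Submodule.span ℝ ((fun h => pvfEval h a) '' accFam f g k)

/-- `C(a) = span_ℝ {h(a) : h ∈ 𝒞}`, where `𝒞 = ⋃ k, 𝒞^k`. -/
noncomputable def accSpanInf {n m : ℕ} (f : Fin n → MvPolynomial (Fin n) ℝ)
    (g : Fin m → Fin n → MvPolynomial (Fin n) ℝ) (a : Fin n → ℝ) :
    Submodule ℝ (Fin n → ℝ) :=
  Submodule.span ℝ ((fun h => pvfEval h a) '' ⋃ k, accFam f g k)

/-- `S_k^{<l} = {a : dim C^k(a) < l}`. -/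
def singularSetLt {n m : ℕ} (f : Fin n → MvPolynomial (Fin n) ℝ)
    (g : Fin m → Fin n → MvPolynomial (Fin n) ℝ) (k l : ℕ) : Set (Fin n → ℝ) :=
  {a | Module.finrank ℝ (accSpan f g k a) < l}

/-- `S_∞^{<l} = {a : dim C(a) < l}`;  `S_∞ = S_∞^{<n}`. -/
def singularSetInfLt {n m : ℕ} (f : Fin n → MvPolynomial (Fin n) ℝ)
    (g : Fin m → Fin n → MvPolynomial (Fin n) ℝ) (l : ℕ) : Set (Fin n → ℝ) :=
  {a | Module.finrank ℝ (accSpanInf f g a) < l}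

/-- The ideal `I_{M_k}^{<l}` generated by the determinants of all `l×l` submatrices of the
matrix whose columns are the elements of `𝒞^k` (choices of `l` columns from `𝒞^k` and
`l` rows). -/
noncomputable def minorIdeal {n m : ℕ} (f : Fin n → MvPolynomial (Fin n) ℝ)
    (g : Fin m → Fin n → MvPolynomial (Fin n) ℝ) (k l : ℕ) :
    Ideal (MvPolynomial (Fin n) ℝ) :=
  Ideal.span {p | ∃ (rows : Fin l → Fin n) (cols : Fin l → (Fin n → MvPolynomial (Fin n) ℝ)),
    (∀ j, cols j ∈ accFam f g k) ∧ p = (Matrix.of fun i j => cols j (rows i)).det}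

section Aux

variable {n m : ℕ} (f : Fin n → MvPolynomial (Fin n) ℝ)
    (g : Fin m → Fin n → MvPolynomial (Fin n) ℝ)

lemma accFam_mono : Monotone (accFam f g) :=
  monotone_nat_of_le_succ fun _ => Set.subset_union_left

lemma accSpan_mono (a : Fin n → ℝ) : Monotone (fun k => accSpan f g k a) :=
  fun _ _ hkl => Submodule.span_mono (Set.image_mono (accFam_mono f g hkl))

lemma accSpan_le_inf (k : ℕ) (a : Fin n → ℝ) : accSpan f g k a ≤ accSpanInf f g a :=
  Submodule.span_mono (Set.image_mono (Set.subset_iUnion _ k))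

lemma det_eq_zero_of_not_li {w : Fin n → (Fin n → ℝ)} (hw : ¬ LinearIndependent ℝ w) :
    (Matrix.of fun i j => w j i).det = 0 := by
  rw [← Matrix.exists_mulVec_eq_zero_iff]
  obtain ⟨gc, hsum, j0, hj0⟩ := Fintype.not_linearIndependent_iff.mp hw
  refine ⟨gc, fun h0 => hj0 (by simp [h0]), ?_⟩
  ext i
  have := congrFun hsum i
  simpa [Matrix.mulVec, dotProduct, Finset.sum_apply, mul_comm] using this

lemma pi_toMatrix_eq (w : Fin n → (Fin n → ℝ)) :
    (Pi.basisFun ℝ (Fin n)).toMatrix w = Matrix.of fun i j => w j i := by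
  ext i j
  simp [Module.Basis.toMatrix_apply]

lemma span_eq_top_iff (S : Set (Fin n → ℝ)) :
    Submodule.span ℝ S = ⊤ ↔
      ∃ w : Fin n → (Fin n → ℝ), (∀ j, w j ∈ S) ∧ (Matrix.of fun i j => w j i).det ≠ 0 := by
  constructor
  · intro hS
    obtain ⟨b, hbS, hbspan, hbli⟩ := exists_linearIndependent ℝ S
    have hfin : b.Finite := hbli.setFinite
    haveI := hfin.fintype
    have hbtop : Submodule.span ℝ b = ⊤ := by rw [hbspan, hS]
    have hcard : Fintype.card b = n := by
      have h1 := Module.finrank_eq_card_basis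
        (Module.Basis.mk hbli (by rw [Subtype.range_coe, hbtop]))
      rw [Module.finrank_fin_fun] at h1
      exact h1.symm
    let e : Fin n ≃ b := (Fintype.equivFinOfCardEq hcard).symm
    have hli : LinearIndependent ℝ (fun j => ((e j : b) : Fin n → ℝ)) :=
      hbli.comp e e.injective
    have hrange : Set.range (fun j => ((e j : b) : Fin n → ℝ)) = b := by
      have : (fun j => ((e j : b) : Fin n → ℝ)) = ((↑) : b → (Fin n → ℝ)) ∘ e := rfl
      rw [this, Set.range_comp, e.surjective.range_eq, Set.image_univ, Subtype.range_coe]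
    have hsp : Submodule.span ℝ (Set.range (fun j => ((e j : b) : Fin n → ℝ))) = ⊤ := by
      rw [hrange, hbtop]
    have hunit := (Module.Basis.is_basis_iff_det (Pi.basisFun ℝ (Fin n))).mp ⟨hli, hsp⟩
    rw [Module.Basis.det_apply, pi_toMatrix_eq] at hunit
    exact ⟨fun j => ((e j : b) : Fin n → ℝ), fun j => hbS (e j).2, hunit.ne_zero⟩
  · rintro ⟨w, hwS, hwdet⟩
    have hunit : IsUnit ((Pi.basisFun ℝ (Fin n)).det w) := by
      rw [Module.Basis.det_apply, pi_toMatrix_eq]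
      exact isUnit_iff_ne_zero.mpr hwdet
    have h2 := ((Module.Basis.is_basis_iff_det (Pi.basisFun ℝ (Fin n))).mpr hunit).2
    exact top_unique (h2 ▸ Submodule.span_mono (Set.range_subset_iff.mpr hwS))

lemma singular_eq_zeroSet (k : ℕ) :
    singularSetLt f g k n = zeroSet (minorIdeal f g k n) := by
  ext a
  constructor
  · intro ha p hp
    have hT : {p : MvPolynomial (Fin n) ℝ |
        ∃ (rows : Fin n → Fin n) (cols : Fin n → (Fin n → MvPolynomial (Fin n) ℝ)),
          (∀ j, cols j ∈ accFam f g k) ∧ p = (Matrix.of fun i j => cols j (rows i)).det}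
        ⊆ (RingHom.ker (eval a) : Ideal (MvPolynomial (Fin n) ℝ)) := by
      rintro q ⟨rows, cols, hcols, rfl⟩
      have hv : ¬ LinearIndependent ℝ (fun j => pvfEval (cols j) a) := by
        intro hli
        have hmem : ∀ j, pvfEval (cols j) a ∈ accSpan f g k a := fun j =>
          Submodule.subset_span ⟨cols j, hcols j, rfl⟩
        have hli' : LinearIndependent ℝ
            (fun j => (⟨pvfEval (cols j) a, hmem j⟩ : accSpan f g k a)) :=
          LinearIndependent.of_comp (accSpan f g k a).subtype hli
        have := hli'.fintype_card_le_finrank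
        simp only [Fintype.card_fin] at this
        exact absurd ha (not_lt.mpr this)
      obtain ⟨gc, hsum, j0, hj0⟩ := Fintype.not_linearIndependent_iff.mp hv
      have hw : ¬ LinearIndependent ℝ (fun j => (fun i => pvfEval (cols j) a (rows i))) := by
        apply Fintype.not_linearIndependent_iff.mpr
        refine ⟨gc, ?_, j0, hj0⟩
        ext i
        have := congrFun hsum (rows i)
        simpa [Finset.sum_apply] using this
      have hdet := det_eq_zero_of_not_li hw
      have hmap : (eval a) ((Matrix.of fun i j => cols j (rows i)).det)
          = (Matrix.of fun i j => pvfEval (cols j) a (rows i)).det := by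
        rw [RingHom.map_det]
        rfl
      simpa [RingHom.mem_ker, hmap] using hdet
    exact Ideal.span_le.mpr hT hp
  · intro ha
    by_contra h
    have hle : Module.finrank ℝ (accSpan f g k a) ≤ n :=
      (Submodule.finrank_le _).trans_eq (Module.finrank_fin_fun ℝ)
    have heq : Module.finrank ℝ (accSpan f g k a) = n := by
      simp only [singularSetLt, Set.mem_setOf_eq, not_lt] at h
      omega
    have htop : accSpan f g k a = ⊤ := by
      apply Submodule.eq_top_of_finrank_eq
      rw [heq, Module.finrank_fin_fun]
    obtain ⟨w, hwS, hwdet⟩ := (span_eq_top_iff _).mp htop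
    choose cols hcols hev using hwS
    have hgen : ((Matrix.of fun i j => cols j ((id : Fin n → Fin n) i)).det)
        ∈ minorIdeal f g k n :=
      Ideal.subset_span ⟨id, cols, hcols, rfl⟩
    have h0 := ha _ hgen
    rw [RingHom.map_det] at h0
    have : ((eval a).mapMatrix (Matrix.of fun i j => cols j ((id : Fin n → Fin n) i)))
        = Matrix.of fun i j => w j i := by
      ext i j
      simp only [RingHom.mapMatrix_apply, Matrix.map_apply, Matrix.of_apply, id]
      rw [← hev j]
      rfl
    rw [this] at h0
    exact hwdet h0

lemma minorIdeal_mono : Monotone (fun k => minorIdeal f g k n) :=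
  monotone_nat_of_le_succ fun k => Ideal.span_mono (by
    rintro p ⟨rows, cols, hcols, rfl⟩
    exact ⟨rows, cols, fun j => accFam_mono f g (Nat.le_succ k) (hcols j), rfl⟩)

end Aux

/-- For a polynomial control system on `ℝ^n`:
(i) `S_{k+1} ⊆ S_k`; (ii) there is `r*` with `S_k = S_{r*}` for all `k ≥ r*` and
`S_{r*} = S_∞`; (iii) `S_∞ = 𝕍(I_{M_{r*}})`, so `S_∞` is an algebraic set. -/
theorem singular_sets_stabilize {n m : ℕ} (f : Fin n → MvPolynomial (Fin n) ℝ)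
    (g : Fin m → Fin n → MvPolynomial (Fin n) ℝ) :
    (∀ k : ℕ, singularSetLt f g (k + 1) n ⊆ singularSetLt f g k n) ∧
    ∃ r : ℕ, (∀ k ≥ r, singularSetLt f g k n = singularSetLt f g r n) ∧
      singularSetLt f g r n = singularSetInfLt f g n ∧
      singularSetInfLt f g n = zeroSet (minorIdeal f g r n) := by
  have hmonoS : ∀ {k l : ℕ}, k ≤ l → singularSetLt f g l n ⊆ singularSetLt f g k n := by
    intro k l hkl a ha
    exact lt_of_le_of_lt (Submodule.finrank_mono (accSpan_mono f g a hkl)) ha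
  refine ⟨fun k => hmonoS (Nat.le_succ k), ?_⟩
  obtain ⟨r, hr⟩ := monotone_stabilizes_iff_noetherian.mpr inferInstance
    (⟨fun k => minorIdeal f g k n, minorIdeal_mono f g⟩ :
      ℕ →o Ideal (MvPolynomial (Fin n) ℝ))
  have hSk : ∀ k, singularSetLt f g k n = zeroSet (minorIdeal f g k n) :=
    singular_eq_zeroSet f g
  have hstab : ∀ k ≥ r, singularSetLt f g k n = singularSetLt f g r n := by
    intro k hk
    have hI : minorIdeal f g r n = minorIdeal f g k n := hr k hk
    rw [hSk, hSk, ← hI]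
  have hSinf : singularSetLt f g r n = singularSetInfLt f g n := by
    ext a
    constructor
    · intro ha
      obtain ⟨K, hK⟩ := monotone_stabilizes_iff_noetherian.mpr inferInstance
        (⟨fun k => accSpan f g k a, accSpan_mono f g a⟩ : ℕ →o Submodule ℝ (Fin n → ℝ))
      have hinf : accSpanInf f g a = accSpan f g K a := by
        apply le_antisymm
        · rw [accSpanInf, Set.image_iUnion, Submodule.span_iUnion]
          exact iSup_le fun k => by
            rcases le_total k K with h | h
            · exact accSpan_mono f g a h
            · exact (hK k h).ge
        · exact accSpan_le_inf f g K a
      have haK : a ∈ singularSetLt f g K n := by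
        rcases le_total K r with h | h
        · exact hmonoS h ha
        · rw [hstab K h]; exact ha
      show Module.finrank ℝ (accSpanInf f g a) < n
      rw [hinf]
      exact haK
    · intro ha
      exact lt_of_le_of_lt (Submodule.finrank_mono (accSpan_le_inf f g r a)) ha
  exact ⟨r, hstab, hSinf, by rw [← hSinf, hSk r]⟩
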